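/- Let V(λ) be the irreducible highest weight U_q(gl(m,n))-module with highest weight λ, and assume V(λ) lies in the category O_int. Set λ_i = ⟨h_i, λ⟩. Then (i) λ₀ ≥ λ₁ + λ₂ + ... + λ_{n−1}, and (ii) if λ_k > 0 for some k ∈ {1,...,n−1}, then λ₀ − λ₁ − ... − λ_k ≥ k. The proof uses only the following two properties of the weight set Wt(M) of a module M in O_int: (a) (β, μ) ≥ 0 for every positive odd root β and every μ ∈ Wt(M); (b) if (β, μ) ≠ 0 and μ + β ∉ Wt(M) then μ − β ∈ Wt(M). -/

import Mathlib

/-- The symmetric bilinear form on the weight lattice of `gl(m,n)`, in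
coordinates indexed by the letter codes `0, …, m+n-1`:
`(ε_a, ε_a) = 1` for barred `a` (codes `< m`), `−1` for unbarred `a`. -/
def pform (m n : ℕ) (l μ : ℕ → ℤ) : ℤ :=
  ∑ x ∈ Finset.range m, l x * μ x - ∑ x ∈ Finset.range n, l (m + x) * μ (m + x)

/-- The positive odd root `β_b = ε_{m-1} − ε_{m+b}`. -/
def bet (m b : ℕ) : ℕ → ℤ := Pi.single (m-1) 1 - Pi.single (m+b) 1

/-- `μ_t = λ − β_0 − ⋯ − β_{t-1}`. -/
def muW (m : ℕ) (lam : ℕ → ℤ) (t : ℕ) : ℕ → ℤ := lam - ∑ i ∈ Finset.range t, bet m i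

lemma bet_m1 (m b : ℕ) (hm : 0 < m) : bet m b (m-1) = 1 := by
  simp [bet, Pi.single_apply]
  omega

lemma bet_mj (m b j : ℕ) (hm : 0 < m) : bet m b (m+j) = if j = b then -1 else 0 := by
  simp [bet, Pi.single_apply]
  split_ifs with h1 h2 h2 <;> omega

lemma sum_single (N c : ℕ) :
    ∑ i ∈ Finset.range N, (Pi.single c (1:ℤ)) i = if c < N then 1 else 0 := by
  simp [Pi.single_apply, Finset.sum_ite_eq', Finset.mem_range]

lemma sum_bet (m b N : ℕ) :
    ∑ i ∈ Finset.range N, bet m b i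
      = (if m-1 < N then 1 else 0) - (if m+b < N then 1 else 0) := by
  simp [bet, Finset.sum_sub_distrib, sum_single]

lemma pform_bet (m n b : ℕ) (hm : 0 < m) (hb : b < n) (μ : ℕ → ℤ) :
    pform m n (bet m b) μ = μ (m-1) + μ (m+b) := by
  unfold pform
  have h1 : ∑ x ∈ Finset.range m, bet m b x * μ x = μ (m-1) := by
    have : ∀ x ∈ Finset.range m, bet m b x * μ x = if x = m-1 then μ x else 0 := by
      intro x hx
      simp only [Finset.mem_range] at hx
      simp only [bet, Pi.sub_apply, Pi.single_apply]
      split_ifs with h1 h2 h2 <;> first | ring1 | omega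
    rw [Finset.sum_congr rfl this, Finset.sum_ite_eq' (Finset.range m) (m-1)]
    simp [Nat.sub_lt hm one_pos]
  have h2 : ∑ x ∈ Finset.range n, bet m b (m + x) * μ (m + x) = -μ (m+b) := by
    have : ∀ x ∈ Finset.range n, bet m b (m+x) * μ (m+x) = if x = b then -μ (m+x) else 0 := by
      intro x hx
      rw [bet_mj m b x hm]
      split_ifs <;> ring
    rw [Finset.sum_congr rfl this, Finset.sum_ite_eq' (Finset.range n) b]
    simp [hb]
  rw [h1, h2]; ring

lemma muW_m1 (m : ℕ) (lam : ℕ → ℤ) (t : ℕ) (hm : 0 < m) :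
    muW m lam t (m-1) = lam (m-1) - t := by
  simp only [muW, Pi.sub_apply, Finset.sum_apply]
  rw [Finset.sum_congr rfl (fun i _ => bet_m1 m i hm)]
  simp

lemma muW_mj (m : ℕ) (lam : ℕ → ℤ) (t j : ℕ) (hm : 0 < m) :
    muW m lam t (m+j) = lam (m+j) + (if j < t then 1 else 0) := by
  simp only [muW, Pi.sub_apply, Finset.sum_apply]
  rw [Finset.sum_congr rfl (fun i _ => bet_mj m i j hm)]
  rw [Finset.sum_ite_eq (Finset.range t) j (fun _ => (-1 : ℤ))]
  simp only [Finset.mem_range]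
  split_ifs <;> ring

lemma closure_partial (m n N : ℕ) (v : ℕ → ℤ)
    (hv : v ∈ AddSubmonoid.closure
        {x : ℕ → ℤ | ∃ c, c + 1 < m + n ∧ x = Pi.single c 1 - Pi.single (c + 1) 1}) :
    0 ≤ ∑ i ∈ Finset.range N, v i := by
  induction hv using AddSubmonoid.closure_induction with
  | mem x hx =>
    obtain ⟨c, hc, rfl⟩ := hx
    simp only [Pi.sub_apply, Finset.sum_sub_distrib, Pi.single_apply]
    rw [Finset.sum_ite_eq' (Finset.range N) c, Finset.sum_ite_eq' (Finset.range N) (c+1)]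
    simp only [Finset.mem_range]
    split_ifs <;> omega
  | zero => simp
  | add x y hx hy ihx ihy =>
    simp only [Pi.add_apply, Finset.sum_add_distrib]
    positivity

lemma telescope (m : ℕ) (lam : ℕ → ℤ) (k : ℕ) :
    ∑ j ∈ Finset.Icc 1 k, (lam (m + j - 1) - lam (m + j)) = lam m - lam (m + k) := by
  induction k with
  | zero => simp
  | succ k ih =>
    rw [Finset.sum_Icc_succ_top (Nat.succ_le_succ (Nat.zero_le k)), ih]
    have h1 : m + (k+1) - 1 = m + k := by omega
    rw [h1]; ring

lemma bkk_main (m n : ℕ) (hm : 0 < m)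
    (lam : ℕ → ℤ) (W : Set (ℕ → ℤ)) (hlamW : lam ∈ W)
    (hQ : ∀ μ ∈ W, lam - μ ∈ AddSubmonoid.closure
        {x : ℕ → ℤ | ∃ c, c + 1 < m + n ∧ x = Pi.single c 1 - Pi.single (c + 1) 1})
    (hpos : ∀ μ ∈ W, ∀ a < m, ∀ b < n,
      0 ≤ pform m n (Pi.single a 1 - Pi.single (m + b) 1) μ)
    (him : ∀ μ ∈ W, ∀ a < m, ∀ b < n,
      pform m n (Pi.single a 1 - Pi.single (m + b) 1) μ ≠ 0 →
      μ + (Pi.single a 1 - Pi.single (m + b) 1) ∉ W →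
      μ - (Pi.single a 1 - Pi.single (m + b) 1) ∈ W)
    (k : ℕ) (hk : k < n) (hk1 : 1 ≤ k)
    (hlk : lam (m + k) < lam (m + (k-1))) :
    (k : ℤ) ≤ lam (m - 1) + lam (m + k) := by
  have hm1 : m - 1 < m := Nat.sub_lt hm one_pos
  have hpos' : ∀ μ ∈ W, ∀ b < n, 0 ≤ pform m n (bet m b) μ :=
    fun μ hμ b hb => hpos μ hμ (m-1) hm1 b hb
  have him' : ∀ μ ∈ W, ∀ b < n, pform m n (bet m b) μ ≠ 0 →
      μ + bet m b ∉ W → μ - bet m b ∈ W :=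
    fun μ hμ b hb => him μ hμ (m-1) hm1 b hb
  -- non-membership of μ_t + β_j for t ≤ j
  have nm : ∀ t j : ℕ, t ≤ j → muW m lam t + bet m j ∉ W := by
    intro t j htj hmem
    have h1 := closure_partial m n (m+t) _ (hQ _ hmem)
    have h2 : lam - (muW m lam t + bet m j)
        = (∑ i ∈ Finset.range t, bet m i) - bet m j := by
      simp only [muW]; ring
    rw [h2] at h1
    have h3 : ∑ i ∈ Finset.range (m+t),
        ((∑ i' ∈ Finset.range t, bet m i') - bet m j) i = -1 := by
      simp only [Pi.sub_apply, Finset.sum_apply, Finset.sum_sub_distrib]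
      rw [Finset.sum_comm]
      have e1 : ∀ i' ∈ Finset.range t, ∑ i ∈ Finset.range (m+t), bet m i' i = 0 := by
        intro i' hi'
        simp only [Finset.mem_range] at hi'
        rw [sum_bet]
        have hlt : m - 1 < m + t := by omega
        have hlt2 : m + i' < m + t := by omega
        simp [hlt, hlt2]
      rw [Finset.sum_congr rfl e1, sum_bet]
      have h4 : ¬ (m + j < m + t) := by omega
      have h5 : m - 1 < m + t := by omega
      simp [h4, h5]
    rw [h3] at h1
    omega
  -- value of the form on μ_t
  have pf : ∀ t j : ℕ, j < n → pform m n (bet m j) (muW m lam t)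
      = lam (m-1) + lam (m+j) - t + (if j < t then 1 else 0) := by
    intro t j hj
    rw [pform_bet m n j hm hj, muW_m1 m lam t hm, muW_mj m lam t j hm]
    ring
  -- the reflection chain
  have chain : ∀ t, t ≤ k → muW m lam t ∈ W ∨
      ∃ t', t' < k ∧ muW m lam t' ∈ W ∧ lam (m-1) + lam (m+t') = (t' : ℤ) := by
    intro t
    induction t with
    | zero =>
      intro _
      left
      simpa [muW] using hlamW
    | succ t ih =>
      intro ht
      have htk : t < k := ht
      rcases ih (le_of_lt htk) with hmem | hstuck
      · by_cases hc : lam (m-1) + lam (m+t) = (t:ℤ)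
        · exact Or.inr ⟨t, htk, hmem, hc⟩
        · left
          have hne : pform m n (bet m t) (muW m lam t) ≠ 0 := by
            rw [pf t t (lt_trans htk hk), if_neg (lt_irrefl t)]
            intro h; exact hc (by linarith)
          have hres := him' _ hmem t (lt_trans htk hk) hne (nm t t le_rfl)
          have heq : muW m lam (t+1) = muW m lam t - bet m t := by
            simp only [muW, Finset.sum_range_succ]
            ring
          rw [heq]
          exact hres
      · exact Or.inr hstuck
  rcases chain k le_rfl with hmem | ⟨t', ht'k, hmem, hc⟩
  · have h0 := hpos' _ hmem k hk
    rw [pf k k hk, if_neg (lt_irrefl k)] at h0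
    linarith
  · exfalso
    have ht'n : t' < n := lt_trans ht'k hk
    have hconst : ∀ j, t' < j → j < n → lam (m-1) + lam (m+j) = (t' : ℤ) := by
      intro j htj hj
      by_contra hne
      have hpf : pform m n (bet m j) (muW m lam t') ≠ 0 := by
        rw [pf t' j hj, if_neg (by omega : ¬ j < t')]
        intro h; exact hne (by linarith)
      have hν := him' _ hmem j hj hpf (nm t' j (le_of_lt htj))
      have h0 := hpos' _ hν t' ht'n
      rw [pform_bet m n t' hm ht'n] at h0
      have e1 : (muW m lam t' - bet m j) (m-1) = lam (m-1) - t' - 1 := by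
        rw [Pi.sub_apply, muW_m1 m lam t' hm, bet_m1 m j hm]
      have e2 : (muW m lam t' - bet m j) (m+t') = lam (m+t') := by
        rw [Pi.sub_apply, muW_mj m lam t' t' hm, bet_mj m j t' hm,
          if_neg (lt_irrefl t'), if_neg (by omega : ¬ t' = j)]
        ring
      rw [e1, e2] at h0
      linarith
    have h1 := hconst k ht'k hk
    have h2 : lam (m-1) + lam (m + (k-1)) = (t' : ℤ) := by
      rcases Nat.lt_or_ge t' (k-1) with h | h
      · exact hconst (k-1) h (by omega)
      · have : t' = k - 1 := by omega
        rw [← this]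
        exact hc
    linarith

/-- Proposition 3.5 of Benkart–Kang–Kashiwara, in its formal version.  Let `W`
(the weight set of `V(λ) ∈ O_int`) be a set of weights containing `λ`,
contained in `λ + Q₋` (the simple roots are the consecutive differences
`ε`-coordinates), such that `(β, μ) ≥ 0` for every positive odd root
`β = ε_ā − ε_b` and every `μ ∈ W`, and such that `(β, μ) ≠ 0` together with
`μ + β ∉ W` implies `μ − β ∈ W`.  With `λ₀ = ⟨h₀,λ⟩ = λ_{m-1} + λ_m` and
`λ_k = ⟨h_k,λ⟩ = λ_{m+k-1} − λ_{m+k}`: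
(i) `λ₀ ≥ λ₁ + ⋯ + λ_{n−1}`; and
(ii) if `λ_k > 0` for some `k ∈ {1,…,n−1}`, then
`λ₀ − λ₁ − ⋯ − λ_k ≥ k`. -/
theorem hw_inequalities (m n : ℕ) (hm : 0 < m) (hn : 0 < n)
    (lam : ℕ → ℤ) (W : Set (ℕ → ℤ)) (hlamW : lam ∈ W)
    (hQ : ∀ μ ∈ W, lam - μ ∈ AddSubmonoid.closure
        {x : ℕ → ℤ | ∃ c, c + 1 < m + n ∧ x = Pi.single c 1 - Pi.single (c + 1) 1})
    (hpos : ∀ μ ∈ W, ∀ a < m, ∀ b < n,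
      0 ≤ pform m n (Pi.single a 1 - Pi.single (m + b) 1) μ)
    (him : ∀ μ ∈ W, ∀ a < m, ∀ b < n,
      pform m n (Pi.single a 1 - Pi.single (m + b) 1) μ ≠ 0 →
      μ + (Pi.single a 1 - Pi.single (m + b) 1) ∉ W →
      μ - (Pi.single a 1 - Pi.single (m + b) 1) ∈ W) :
    (∑ k ∈ Finset.Icc 1 (n - 1), (lam (m + k - 1) - lam (m + k))
        ≤ lam (m - 1) + lam m) ∧
    (∀ k, 1 ≤ k → k ≤ n - 1 → 0 < lam (m + k - 1) - lam (m + k) →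
      (k : ℤ) ≤ (lam (m - 1) + lam m)
          - ∑ j ∈ Finset.Icc 1 k, (lam (m + j - 1) - lam (m + j))) := by
  have hm1 : m - 1 < m := Nat.sub_lt hm one_pos
  constructor
  · have hn1 : n - 1 < n := Nat.sub_lt hn one_pos
    have h0 : (0:ℤ) ≤ pform m n (bet m (n-1)) lam :=
      hpos lam hlamW (m-1) hm1 (n-1) hn1
    rw [pform_bet m n (n-1) hm hn1 lam] at h0
    rw [telescope m lam (n-1)]
    linarith
  · intro k hk1 hk2 hlk
    have hkn : k < n := lt_of_le_of_lt hk2 (Nat.sub_lt hn one_pos)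
    have hidx : m + k - 1 = m + (k - 1) := by omega
    rw [hidx] at hlk
    have hmain := bkk_main m n hm lam W hlamW hQ hpos him k hkn hk1 (by linarith)
    rw [telescope m lam k]
    linarith
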